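/- Let f: [0,1] → ℝ be nonnegative and integrable, and let k, ℓ ∈ ℤ with 0 ≤ k ≤ ℓ. Let E_k f and E_ℓ f denote the dyadic martingale averages at scales 2^{-k} and 2^{-ℓ} respectively. Then ∫_0^1 f · (E_k f) · (E_ℓ f) ≥ (∫_0^1 f)³. -/

import Mathlib

open MeasureTheory Set

/-- Dyadic martingale average at scale `2^(-k)`. -/
noncomputable def dyadicAvg (k : ℤ) (f : ℝ → ℝ) (x : ℝ) : ℝ :=
  (2 : ℝ) ^ k * ∫ y in Set.Ico ((2 : ℝ) ^ (-k) * ⌊(2 : ℝ) ^ k * x⌋)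
      ((2 : ℝ) ^ (-k) * (⌊(2 : ℝ) ^ k * x⌋ + 1)), f y

/-- Reindexing a sum over `range (n*m)` as a double sum. -/
lemma sum_range_mul_eq (g : ℕ → ℝ) (n m : ℕ) :
    ∑ i ∈ Finset.range (n * m), g i
      = ∑ p ∈ Finset.range n, ∑ j ∈ Finset.range m, g (p * m + j) := by
  induction n with
  | zero => simp
  | succ n ih =>
      rw [Nat.succ_mul, Finset.sum_range_add, ih, Finset.sum_range_succ]

/-- The key finite inequality (Cauchy–Schwarz + power mean). -/
lemma cube_sum_le (n m : ℕ) (hn : 0 < n) (hm : 0 < m) (a : ℕ → ℝ)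
    (ha : ∀ i, 0 ≤ a i) :
    (∑ i ∈ Finset.range (n * m), a i) ^ 3 ≤
      (n : ℝ) ^ 2 * m * ∑ p ∈ Finset.range n,
        (∑ j ∈ Finset.range m, a (p * m + j)) *
          (∑ j ∈ Finset.range m, (a (p * m + j)) ^ 2) := by
  set A : ℕ → ℝ := fun p => ∑ j ∈ Finset.range m, a (p * m + j) with hA
  have hA0 : ∀ p, 0 ≤ A p := fun p => Finset.sum_nonneg fun j _ => ha _
  have hsum : ∑ i ∈ Finset.range (n * m), a i = ∑ p ∈ Finset.range n, A p :=
    sum_range_mul_eq a n m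
  have hCS : ∀ p, (A p) ^ 2 ≤ (m : ℝ) * ∑ j ∈ Finset.range m, (a (p * m + j)) ^ 2 := by
    intro p
    have := sq_sum_le_card_mul_sum_sq (s := Finset.range m)
      (f := fun j => a (p * m + j))
    simpa using this
  have h1 : ∑ p ∈ Finset.range n, (A p) ^ 3
      ≤ (m : ℝ) * ∑ p ∈ Finset.range n,
          A p * ∑ j ∈ Finset.range m, (a (p * m + j)) ^ 2 := by
    rw [Finset.mul_sum]
    refine Finset.sum_le_sum fun p _ => ?_
    have : (A p) ^ 3 = A p * (A p) ^ 2 := by ring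
    rw [this]
    calc A p * (A p) ^ 2
        ≤ A p * ((m : ℝ) * ∑ j ∈ Finset.range m, (a (p * m + j)) ^ 2) :=
          mul_le_mul_of_nonneg_left (hCS p) (hA0 p)
      _ = (m : ℝ) * (A p * ∑ j ∈ Finset.range m, (a (p * m + j)) ^ 2) := by ring
  have h2 : (∑ p ∈ Finset.range n, A p) ^ 3
      ≤ (n : ℝ) ^ 2 * ∑ p ∈ Finset.range n, (A p) ^ 3 := by
    have := pow_sum_div_card_le_sum_pow (s := Finset.range n) (f := A)
      (fun i _ => hA0 i) 2
    simp only [Finset.card_range] at this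
    rw [div_le_iff₀ (by positivity : (0:ℝ) < ((n:ℝ))^2)] at this
    calc (∑ p ∈ Finset.range n, A p) ^ 3
        ≤ (∑ p ∈ Finset.range n, (A p) ^ 3) * (n : ℝ) ^ 2 := this
      _ = (n : ℝ) ^ 2 * ∑ p ∈ Finset.range n, (A p) ^ 3 := by ring
  calc (∑ i ∈ Finset.range (n * m), a i) ^ 3
      = (∑ p ∈ Finset.range n, A p) ^ 3 := by rw [hsum]
    _ ≤ (n : ℝ) ^ 2 * ∑ p ∈ Finset.range n, (A p) ^ 3 := h2
    _ ≤ (n : ℝ) ^ 2 * ((m : ℝ) * ∑ p ∈ Finset.range n,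
          A p * ∑ j ∈ Finset.range m, (a (p * m + j)) ^ 2) := by
        exact mul_le_mul_of_nonneg_left h1 (by positivity)
    _ = (n : ℝ) ^ 2 * m * ∑ p ∈ Finset.range n,
          A p * ∑ j ∈ Finset.range m, (a (p * m + j)) ^ 2 := by ring

/-- Splitting an integral over `Ico b (b + c*n)` into `n` pieces. -/
lemma integral_Ico_split (g : ℝ → ℝ) (b c : ℝ) (hc : 0 ≤ c) (n : ℕ)
    (hg : IntegrableOn g (Set.Ico b (b + c * n))) :
    ∫ x in Set.Ico b (b + c * n), g x
      = ∑ i ∈ Finset.range n, ∫ x in Set.Ico (b + c * i) (b + c * (i + 1)), g x := by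
  induction n with
  | zero => simp
  | succ n ih =>
      have hn0 : (0 : ℝ) ≤ c * n := by positivity
      have hle1 : b ≤ b + c * n := by linarith
      have hle2 : b + c * n ≤ b + c * (n + 1 : ℕ) := by
        push_cast; nlinarith
      have hunion : Set.Ico b (b + c * n) ∪ Set.Ico (b + c * n) (b + c * (n + 1 : ℕ))
          = Set.Ico b (b + c * (n + 1 : ℕ)) :=
        Set.Ico_union_Ico_eq_Ico hle1 hle2
      have hsub1 : Set.Ico b (b + c * n) ⊆ Set.Ico b (b + c * (n + 1 : ℕ)) :=
        Set.Ico_subset_Ico le_rfl hle2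
      have hsub2 : Set.Ico (b + c * n) (b + c * (n + 1 : ℕ))
          ⊆ Set.Ico b (b + c * (n + 1 : ℕ)) := Set.Ico_subset_Ico hle1 le_rfl
      rw [Finset.sum_range_succ, ← ih (hg.mono_set hsub1), ← hunion,
        setIntegral_union (Set.Ico_disjoint_Ico_same) measurableSet_Ico
          (hg.mono_set hsub1) (hg.mono_set hsub2)]
      push_cast
      ring_nf

lemma floor_eq_of_mem {d : ℝ} (hd : 0 < d) {q : ℕ} {x : ℝ}
    (hx : x ∈ Set.Ico (d⁻¹ * q) (d⁻¹ * (q + 1))) : ⌊d * x⌋ = (q : ℤ) := by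
  obtain ⟨h1, h2⟩ := hx
  rw [Int.floor_eq_iff]
  have e1 : d * (d⁻¹ * (q : ℝ)) = q := by field_simp
  have e2 : d * (d⁻¹ * ((q : ℝ) + 1)) = (q : ℝ) + 1 := by field_simp
  constructor
  · push_cast
    calc (q : ℝ) = d * (d⁻¹ * q) := e1.symm
      _ ≤ d * x := mul_le_mul_of_nonneg_left h1 hd.le
  · push_cast
    calc d * x < d * (d⁻¹ * ((q : ℝ) + 1)) := mul_lt_mul_of_pos_left h2 hd
      _ = (q : ℝ) + 1 := e2

lemma dyadicAvg_eval {k : ℤ} (hk : 0 ≤ k) (f : ℝ → ℝ) {q : ℕ} {x : ℝ}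
    (hx : x ∈ Set.Ico (((2 : ℝ) ^ k.toNat)⁻¹ * q) (((2 : ℝ) ^ k.toNat)⁻¹ * (q + 1))) :
    dyadicAvg k f x = (2 : ℝ) ^ k.toNat *
      ∫ y in Set.Ico (((2 : ℝ) ^ k.toNat)⁻¹ * q) (((2 : ℝ) ^ k.toNat)⁻¹ * (q + 1)), f y := by
  have h2 : (2 : ℝ) ^ k = (2 : ℝ) ^ k.toNat := by
    rw [← zpow_natCast, Int.toNat_of_nonneg hk]
  have hneg : (2 : ℝ) ^ (-k) = ((2 : ℝ) ^ k.toNat)⁻¹ := by rw [zpow_neg, h2]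
  have hfl : ⌊(2 : ℝ) ^ k * x⌋ = (q : ℤ) := by
    rw [h2]; exact floor_eq_of_mem (by positivity) hx
  unfold dyadicAvg
  rw [hfl, h2, hneg]
  norm_num

lemma dyadicAvg_measurable (k : ℤ) (f : ℝ → ℝ) : Measurable (dyadicAvg k f) := by
  have : dyadicAvg k f = (fun n : ℤ => (2 : ℝ) ^ k *
      ∫ y in Set.Ico ((2 : ℝ) ^ (-k) * n) ((2 : ℝ) ^ (-k) * (n + 1)), f y) ∘
      (fun x : ℝ => ⌊(2 : ℝ) ^ k * x⌋) := rfl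
  rw [this]
  exact (measurable_from_top).comp (Int.measurable_floor.comp (measurable_const_mul _))

lemma dyadicAvg_bound (k : ℤ) (f : ℝ → ℝ) (hint : Integrable f) (x : ℝ) :
    ‖dyadicAvg k f x‖ ≤ (2 : ℝ) ^ k * ∫ y, ‖f y‖ := by
  unfold dyadicAvg
  rw [norm_mul]
  have h2 : ‖(2 : ℝ) ^ k‖ = (2 : ℝ) ^ k := by
    rw [Real.norm_eq_abs, abs_of_pos (by positivity)]
  rw [h2]
  refine mul_le_mul_of_nonneg_left ?_ (by positivity)
  calc ‖∫ y in Set.Ico ((2 : ℝ) ^ (-k) * ⌊(2 : ℝ) ^ k * x⌋)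
          ((2 : ℝ) ^ (-k) * (⌊(2 : ℝ) ^ k * x⌋ + 1)), f y‖
      ≤ ∫ y in Set.Ico ((2 : ℝ) ^ (-k) * ⌊(2 : ℝ) ^ k * x⌋)
          ((2 : ℝ) ^ (-k) * (⌊(2 : ℝ) ^ k * x⌋ + 1)), ‖f y‖ :=
        norm_integral_le_integral_norm _
    _ ≤ ∫ y, ‖f y‖ :=
        setIntegral_le_integral hint.norm (Filter.Eventually.of_forall fun y => norm_nonneg _)

theorem stmt1 (f : ℝ → ℝ) (hnn : ∀ x, 0 ≤ f x) (hint : Integrable f)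
    (hsupp : Function.support f ⊆ Set.Icc 0 1)
    (k l : ℤ) (hk : 0 ≤ k) (hkl : k ≤ l) :
    (∫ x in Set.Icc (0 : ℝ) 1, f x) ^ 3 ≤
      ∫ x in Set.Icc (0 : ℝ) 1, f x * dyadicAvg k f x * dyadicAvg l f x := by
  have hl : 0 ≤ l := hk.trans hkl
  set K := k.toNat with hKdef
  set L := l.toNat with hLdef
  have hKL : K ≤ L := Int.toNat_le_toNat hkl
  set M := L - K with hMdef
  have hLKM : L = K + M := (Nat.add_sub_cancel' hKL).symm
  set m := 2 ^ M with hmdef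
  set n := 2 ^ K with hndef
  have hm0 : 0 < m := Nat.pow_pos (by norm_num)
  have hn0 : 0 < n := Nat.pow_pos (by norm_num)
  have hN : 2 ^ L = n * m := by rw [hLKM, pow_add]
  set c : ℝ := ((2 : ℝ) ^ L)⁻¹ with hcdef
  have hc0 : 0 < c := by positivity
  have hcm : c * (m : ℝ) = ((2 : ℝ) ^ K)⁻¹ := by
    rw [hcdef, hmdef]
    push_cast
    rw [hLKM, pow_add]
    field_simp
  -- the pieces
  set a : ℕ → ℝ := fun i => ∫ x in Set.Ico (c * i) (c * (i + 1)), f x with hadef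
  have ha0 : ∀ i, 0 ≤ a i := fun i =>
    setIntegral_nonneg measurableSet_Ico fun x _ => hnn x
  -- membership in a piece pins down both dyadic averages
  have hmemK : ∀ i : ℕ, ∀ x ∈ Set.Ico (c * i) (c * (i + 1)),
      x ∈ Set.Ico (((2 : ℝ) ^ K)⁻¹ * (i / m : ℕ)) (((2 : ℝ) ^ K)⁻¹ * ((i / m : ℕ) + 1)) := by
    intro i x hx
    set p := i / m with hpdef
    have hp1 : p * m ≤ i := Nat.div_mul_le_self i m
    have hp2 : i + 1 ≤ (p + 1) * m := by
      have h1 := Nat.div_add_mod i m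
      have h2 : i % m < m := Nat.mod_lt i hm0
      calc i + 1 = m * p + i % m + 1 := by rw [h1]
        _ ≤ m * p + m := by omega
        _ = (p + 1) * m := by ring
    have e1 : ((2 : ℝ) ^ K)⁻¹ * p = c * ((p * m : ℕ) : ℝ) := by
      rw [← hcm]; push_cast; ring
    have e2 : ((2 : ℝ) ^ K)⁻¹ * (p + 1) = c * (((p + 1) * m : ℕ) : ℝ) := by
      rw [← hcm]; push_cast; ring
    constructor
    · rw [e1]
      calc c * ((p * m : ℕ) : ℝ) ≤ c * i := by
            apply mul_le_mul_of_nonneg_left _ hc0.le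
            exact_mod_cast Nat.cast_le.mpr hp1
        _ ≤ x := hx.1
    · rw [e2]
      calc x < c * (i + 1) := hx.2
        _ ≤ c * (((p + 1) * m : ℕ) : ℝ) := by
            apply mul_le_mul_of_nonneg_left _ hc0.le
            push_cast
            exact_mod_cast Nat.cast_le.mpr hp2
  have hmemL : ∀ i : ℕ, ∀ x ∈ Set.Ico (c * i) (c * (i + 1)),
      x ∈ Set.Ico (((2 : ℝ) ^ L)⁻¹ * i) (((2 : ℝ) ^ L)⁻¹ * (i + 1)) := by
    intro i x hx
    rwa [← hcdef]
  -- values of the dyadic averages on a piece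
  set A : ℕ → ℝ := fun p =>
    ∫ x in Set.Ico (((2 : ℝ) ^ K)⁻¹ * p) (((2 : ℝ) ^ K)⁻¹ * (p + 1)), f x with hAdef
  have hEk : ∀ i : ℕ, ∀ x ∈ Set.Ico (c * i) (c * (i + 1)),
      dyadicAvg k f x = (2 : ℝ) ^ K * A (i / m) := fun i x hx =>
    dyadicAvg_eval hk f (hmemK i x hx)
  have hEl : ∀ i : ℕ, ∀ x ∈ Set.Ico (c * i) (c * (i + 1)),
      dyadicAvg l f x = (2 : ℝ) ^ L * a i := by
    intro i x hx
    exact dyadicAvg_eval hl f (hmemL i x hx)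
  -- A p is the sum of its subpieces
  have hA : ∀ p : ℕ, A p = ∑ j ∈ Finset.range m, a (p * m + j) := by
    intro p
    have hend : ((2 : ℝ) ^ K)⁻¹ * (p + 1) = ((2 : ℝ) ^ K)⁻¹ * p + c * m := by
      rw [hcm]; ring
    have := integral_Ico_split f (((2 : ℝ) ^ K)⁻¹ * p) c hc0.le m
      (by rw [← hend]; exact hint.integrableOn)
    rw [hAdef]
    simp only
    rw [hend, this]
    refine Finset.sum_congr rfl fun j _ => ?_
    have e1 : c * ((p * m + j : ℕ) : ℝ) = ((2 : ℝ) ^ K)⁻¹ * p + c * j := by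
      rw [← hcm]; push_cast; ring
    have e2 : c * (((p * m + j : ℕ) : ℝ) + 1) = ((2 : ℝ) ^ K)⁻¹ * p + c * (j + 1) := by
      rw [← hcm]; push_cast; ring
    rw [hadef]
    simp only
    rw [e1, e2]
  -- LHS: total integral as a sum
  have hone : (1 : ℝ) = 0 + c * ((n * m : ℕ) : ℝ) := by
    have h' : ((n * m : ℕ) : ℝ) = (2 : ℝ) ^ L := by
      rw [← hN]; push_cast; ring
    rw [hcdef, h']
    field_simp
    ring
  have hIcc_Ico : ∀ g : ℝ → ℝ, ∫ x in Set.Icc (0 : ℝ) 1, g x = ∫ x in Set.Ico (0 : ℝ) 1, g x :=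
    fun g => (setIntegral_congr_set Ico_ae_eq_Icc).symm
  have hsplitf : ∫ x in Set.Icc (0 : ℝ) 1, f x = ∑ i ∈ Finset.range (n * m), a i := by
    rw [hIcc_Ico]
    have := integral_Ico_split f 0 c hc0.le (n * m)
      (by rw [← hone]; exact hint.integrableOn)
    rw [hone, this]
    refine Finset.sum_congr rfl fun i _ => ?_
    rw [hadef]
    simp only [zero_add]
  -- integrability of the trilinear integrand
  set g : ℝ → ℝ := fun x => f x * dyadicAvg k f x * dyadicAvg l f x with hgdef
  have hgint : IntegrableOn g (Set.Ico (0 : ℝ) 1) := by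
    have hb : ∀ x, ‖dyadicAvg k f x * dyadicAvg l f x‖ ≤
        ((2 : ℝ) ^ k * ∫ y, ‖f y‖) * ((2 : ℝ) ^ l * ∫ y, ‖f y‖) := by
      intro x
      rw [norm_mul]
      exact mul_le_mul (dyadicAvg_bound k f hint x) (dyadicAvg_bound l f hint x)
        (norm_nonneg _) (le_trans (norm_nonneg _) (dyadicAvg_bound k f hint x))
    have : Integrable (fun x => (dyadicAvg k f x * dyadicAvg l f x) * f x) := by
      refine Integrable.bdd_mul hint
        ((dyadicAvg_measurable k f).mul (dyadicAvg_measurable l f)).aestronglyMeasurable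
        (Filter.Eventually.of_forall hb)
    have heq : g = fun x => (dyadicAvg k f x * dyadicAvg l f x) * f x := by
      funext x; rw [hgdef]; ring
    rw [heq]
    exact this.integrableOn
  -- RHS: the trilinear integral as a sum
  have hsplitg : ∫ x in Set.Icc (0 : ℝ) 1, g x
      = ∑ i ∈ Finset.range (n * m), a i * ((2 : ℝ) ^ K * A (i / m)) * ((2 : ℝ) ^ L * a i) := by
    rw [hIcc_Ico]
    have := integral_Ico_split g 0 c hc0.le (n * m) (by rw [← hone]; exact hgint)
    rw [hone, this]
    refine Finset.sum_congr rfl fun i _ => ?_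
    simp only [zero_add]
    have hcongr : ∫ x in Set.Ico (c * i) (c * (i + 1)), g x
        = ∫ x in Set.Ico (c * i) (c * (i + 1)),
            f x * ((2 : ℝ) ^ K * A (i / m)) * ((2 : ℝ) ^ L * a i) := by
      refine setIntegral_congr_fun measurableSet_Ico fun x hx => ?_
      rw [hgdef]
      simp only
      rw [hEk i x hx, hEl i x hx]
    rw [hcongr]
    have : (fun x => f x * ((2 : ℝ) ^ K * A (i / m)) * ((2 : ℝ) ^ L * a i))
        = fun x => f x * (((2 : ℝ) ^ K * A (i / m)) * ((2 : ℝ) ^ L * a i)) := by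
      funext x; ring
    rw [this, integral_mul_const]
    rw [hadef]
    ring
  -- put everything together
  rw [hsplitf, hsplitg]
  have key := cube_sum_le n m hn0 hm0 a ha0
  refine key.trans (le_of_eq ?_)
  rw [sum_range_mul_eq (fun i => a i * ((2 : ℝ) ^ K * A (i / m)) * ((2 : ℝ) ^ L * a i)) n m]
  rw [Finset.mul_sum]
  refine Finset.sum_congr rfl fun p hp => ?_
  have hdiv : ∀ j ∈ Finset.range m, (p * m + j) / m = p := by
    intro j hj
    rw [Finset.mem_range] at hj
    rw [add_comm, Nat.add_mul_div_right _ _ hm0, Nat.div_eq_of_lt hj, zero_add]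
  have : ∑ j ∈ Finset.range m, a (p * m + j) * ((2 : ℝ) ^ K * A ((p * m + j) / m))
        * ((2 : ℝ) ^ L * a (p * m + j))
      = ∑ j ∈ Finset.range m, (2 : ℝ) ^ K * (2 : ℝ) ^ L * (A p * (a (p * m + j)) ^ 2) := by
    refine Finset.sum_congr rfl fun j hj => ?_
    rw [hdiv j hj]; ring
  rw [this, ← Finset.mul_sum, ← Finset.mul_sum, hA p]
  have hpow : (n : ℝ) ^ 2 * (m : ℝ) = (2 : ℝ) ^ K * (2 : ℝ) ^ L := by
    rw [hndef, hmdef]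
    push_cast
    rw [hLKM, pow_add]
    ring
  rw [← hpow]
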